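/- Monotonicity principle: let S ⊆ ℝⁿ be open, f: S → ℝⁿ continuous, and x: [0,∞) → S a C¹ solution of dx/dt = f(x(t)). Let Z: S → ℝ be C¹ with ∇Z(y)·f(y) > 0 for every y ∈ S. Then every point s̄ of the ω-limit set of the curve x (i.e., every s̄ such that x(tₙ) → s̄ for some sequence tₙ → ∞) satisfies: (i) s̄ ∈ ∂S (s̄ ∉ S); (ii) limsup_{y→s̄, y∈S} Z(y) > inf_S Z; and (iii) at least one of the following holds: limsup_{y→s̄, y∈S} Z(y) = sup_S Z, or liminf_{y→s̄, y∈S} (∇Z·f)(y) = 0, or limsup_{y→s̄, y∈S} |f(y)| = ∞. -/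

import Mathlib

open Filter Set Topology

variable {E : Type*} [NormedAddCommGroup E] [NormedSpace ℝ E]

/-- Core trapping lemma: if near `sbar` the derivative of `Z` along `f` is at least `c`
and `f` is bounded by `M`, and the trajectory comes close to `sbar` with `Z` value close
to an upper bound `L`, we get a contradiction. -/
lemma stmt2_core
    (S : Set E) (f : E → E) (Z : E → ℝ) (Z' : E → (E →L[ℝ] ℝ))
    (hZderiv : ∀ y ∈ S, HasFDerivAt Z (Z' y) y)
    (x : ℝ → E)
    (hxS : ∀ t : ℝ, 0 ≤ t → x t ∈ S)
    (hxode : ∀ t : ℝ, 0 ≤ t → HasDerivAt x (f (x t)) t)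
    (sbar : E) (δ c M : ℝ) (hδ : 0 < δ) (hc : 0 < c) (hM : 0 < M)
    (hb : ∀ y ∈ S ∩ Metric.ball sbar δ, c ≤ Z' y (f y) ∧ ‖f y‖ ≤ M)
    (L : ℝ) (hL : ∀ t : ℝ, 0 ≤ t → Z (x t) ≤ L)
    (t₀ : ℝ) (ht₀ : 0 ≤ t₀) (hball : x t₀ ∈ Metric.ball sbar (δ / 4))
    (hclose : L - c * (δ / (4 * M)) < Z (x t₀)) : False := by
  set τ : ℝ := δ / (4 * M) with hτdef
  have hτ : 0 < τ := by positivity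
  have hxcont : ∀ t : ℝ, 0 ≤ t → ContinuousAt x t := fun t ht => (hxode t ht).continuousAt
  -- trapping: x stays in the closed ball of radius δ/2 on [t₀, t₀ + τ]
  have trap : ∀ t ∈ Icc t₀ (t₀ + τ), dist (x t) sbar ≤ δ / 2 := by
    by_contra hcon
    push_neg at hcon
    set E' : Set ℝ := {t ∈ Icc t₀ (t₀ + τ) | δ / 2 ≤ dist (x t) sbar} with hE'def
    have hE'ne : E'.Nonempty := by
      obtain ⟨t, ht, ht2⟩ := hcon
      exact ⟨t, ht, ht2.le⟩
    have hE'bdd : BddBelow E' := ⟨t₀, fun t ht => ht.1.1⟩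
    have hcontIcc : ContinuousOn (fun t => dist (x t) sbar) (Icc t₀ (t₀ + τ)) := by
      intro t ht
      have h : ContinuousAt (fun u => dist (x u) sbar) t :=
        (hxcont t (ht₀.trans ht.1)).dist continuousAt_const
      exact h.continuousWithinAt
    have hE'closed : IsClosed E' := by
      have : E' = Icc t₀ (t₀ + τ) ∩ (fun t => dist (x t) sbar) ⁻¹' (Ici (δ / 2)) := by
        ext t; simp [hE'def, and_comm]
      rw [this]
      exact hcontIcc.preimage_isClosed_of_isClosed isClosed_Icc isClosed_Ici
    set T : ℝ := sInf E' with hTdef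
    have hTmem : T ∈ E' := hE'closed.csInf_mem hE'ne hE'bdd
    have hTlb : ∀ s ∈ E', T ≤ s := fun s hs => csInf_le hE'bdd hs
    have ht₀T : t₀ < T := by
      rcases lt_or_eq_of_le hTmem.1.1 with h | h
      · exact h
      · exfalso
        have := hTmem.2
        rw [← h] at this
        have h2 := Metric.mem_ball.mp hball
        linarith
    -- every point of [t₀, T] is within δ/2 of sbar
    have hin : ∀ s ∈ Icc t₀ T, dist (x s) sbar ≤ δ / 2 := by
      intro s hs
      rcases lt_or_eq_of_le hs.2 with h | h
      · by_contra hcon2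
        push_neg at hcon2
        have hsE' : s ∈ E' := ⟨⟨hs.1, h.le.trans hTmem.1.2⟩, hcon2.le⟩
        exact absurd (hTlb s hsE') (not_le.mpr h)
      · rw [h]
        -- at T itself: limit from the left
        have hne : (𝓝[Ico t₀ T] T).NeBot := by
          apply mem_closure_iff_nhdsWithin_neBot.mp
          rw [closure_Ico ht₀T.ne]
          exact ⟨hTmem.1.1, le_refl T⟩
        have hct' : ContinuousAt (fun t => dist (x t) sbar) T :=
          (hxcont T (ht₀.trans hTmem.1.1)).dist continuousAt_const
        have hct : ContinuousWithinAt (fun t => dist (x t) sbar) (Ico t₀ T) T :=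
          hct'.continuousWithinAt
        refine le_of_tendsto hct ?_
        filter_upwards [self_mem_nhdsWithin] with u hu
        by_contra hcon2
        push_neg at hcon2
        have huE' : u ∈ E' := ⟨⟨hu.1, hu.2.le.trans hTmem.1.2⟩, hcon2.le⟩
        exact absurd (hTlb u huE') (not_le.mpr hu.2)
    -- speed bound on [t₀, T] gives a contradiction
    have hspeed : ∀ s ∈ Icc t₀ T, HasDerivWithinAt x (f (x s)) (Icc t₀ T) s :=
      fun s hs => (hxode s (ht₀.trans hs.1)).hasDerivWithinAt
    have hbound : ∀ s ∈ Icc t₀ T, ‖f (x s)‖ ≤ M := by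
      intro s hs
      refine (hb (x s) ⟨hxS s (ht₀.trans hs.1), Metric.mem_ball.mpr ?_⟩).2
      have := hin s hs
      linarith
    have hmv :=
      Convex.norm_image_sub_le_of_norm_hasDerivWithin_le hspeed hbound (convex_Icc _ _)
        (left_mem_Icc.mpr hTmem.1.1) (right_mem_Icc.mpr hTmem.1.1)
    have hTτ : T - t₀ ≤ τ := by
      have := hTmem.1.2; linarith
    have hdistT : dist (x T) (x t₀) ≤ δ / 4 := by
      rw [dist_eq_norm]
      calc ‖x T - x t₀‖ ≤ M * ‖T - t₀‖ := hmv
        _ = M * (T - t₀) := by rw [Real.norm_of_nonneg (by linarith)]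
        _ ≤ M * τ := by nlinarith
        _ = δ / 4 := by rw [hτdef]; field_simp
    have h1 : dist (x T) sbar ≤ dist (x T) (x t₀) + dist (x t₀) sbar := dist_triangle _ _ _
    have h2 := Metric.mem_ball.mp hball
    have h3 := hTmem.2
    linarith
  -- now the derivative of Z ∘ x is at least c on [t₀, t₀ + τ]
  set g : ℝ → ℝ := fun t => Z (x t) with hgdef
  have hg : ∀ t : ℝ, 0 ≤ t → HasDerivAt g (Z' (x t) (f (x t))) t := fun t ht =>
    (hZderiv (x t) (hxS t ht)).comp_hasDerivAt t (hxode t ht)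
  have hmem : ∀ t ∈ Icc t₀ (t₀ + τ), x t ∈ S ∩ Metric.ball sbar δ := by
    intro t ht
    refine ⟨hxS t (ht₀.trans ht.1), Metric.mem_ball.mpr ?_⟩
    have := trap t ht
    linarith
  have hgc : ContinuousOn g (Icc t₀ (t₀ + τ)) := fun t ht =>
    (hg t (ht₀.trans ht.1)).continuousAt.continuousWithinAt
  have hgd : DifferentiableOn ℝ g (interior (Icc t₀ (t₀ + τ))) := by
    intro t ht
    rw [interior_Icc] at ht
    exact (hg t (ht₀.trans ht.1.le)).differentiableAt.differentiableWithinAt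
  have hgderiv : ∀ t ∈ interior (Icc t₀ (t₀ + τ)), c ≤ deriv g t := by
    intro t ht
    rw [interior_Icc] at ht
    rw [(hg t (ht₀.trans ht.1.le)).deriv]
    exact (hb (x t) (hmem t (Ioo_subset_Icc_self ht))).1
  have hinc :=
    (convex_Icc t₀ (t₀ + τ)).mul_sub_le_image_sub_of_le_deriv hgc hgd hgderiv t₀
      (left_mem_Icc.mpr (by linarith)) (t₀ + τ) (right_mem_Icc.mpr (by linarith))
      (by linarith)
  have hfin := hL (t₀ + τ) (by linarith)
  simp only [add_sub_cancel_left] at hinc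
  simp only [hgdef] at hinc hfin
  nlinarith

/-- Auxiliary: under uniform bounds on `S ∩ ball sbar δ`, the ω-limit situation is impossible. -/
lemma stmt2_aux
    (S : Set E) (f : E → E) (Z : E → ℝ) (Z' : E → (E →L[ℝ] ℝ))
    (hZderiv : ∀ y ∈ S, HasFDerivAt Z (Z' y) y)
    (hpos : ∀ y ∈ S, 0 < Z' y (f y))
    (x : ℝ → E)
    (hxS : ∀ t : ℝ, 0 ≤ t → x t ∈ S)
    (hxode : ∀ t : ℝ, 0 ≤ t → HasDerivAt x (f (x t)) t)
    (sbar : E)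
    (tn : ℕ → ℝ) (htn0 : ∀ j, 0 ≤ tn j) (htninf : Tendsto tn atTop atTop)
    (htns : Tendsto (fun j => x (tn j)) atTop (nhds sbar))
    (δ c M K : ℝ) (hδ : 0 < δ) (hc : 0 < c) (hM : 0 < M)
    (hb : ∀ y ∈ S ∩ Metric.ball sbar δ, c ≤ Z' y (f y) ∧ ‖f y‖ ≤ M)
    (hK : ∀ y ∈ S ∩ Metric.ball sbar δ, Z y ≤ K) : False := by
  set g : ℝ → ℝ := fun t => Z (x t) with hgdef
  have hg : ∀ t : ℝ, 0 ≤ t → HasDerivAt g (Z' (x t) (f (x t))) t := fun t ht =>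
    (hZderiv (x t) (hxS t ht)).comp_hasDerivAt t (hxode t ht)
  have hgmono : StrictMonoOn g (Ici (0 : ℝ)) := by
    apply strictMonoOn_of_deriv_pos (convex_Ici 0)
    · exact fun t ht => (hg t ht).continuousAt.continuousWithinAt
    · intro t ht
      rw [interior_Ici] at ht
      rw [(hg t ht.le).deriv]
      exact hpos _ (hxS t ht.le)
  -- g is bounded above by K
  have hgK : ∀ t : ℝ, 0 ≤ t → g t ≤ K := by
    intro t ht
    have hev : ∀ᶠ j in atTop, tn j ≥ t ∧ x (tn j) ∈ Metric.ball sbar δ :=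
      (htninf.eventually_ge_atTop t).and (htns (Metric.ball_mem_nhds sbar hδ))
    obtain ⟨j, hj1, hj2⟩ := hev.exists
    calc g t ≤ g (tn j) := hgmono.monotoneOn (mem_Ici.mpr ht) (mem_Ici.mpr (htn0 j)) hj1
      _ ≤ K := hK _ ⟨hxS _ (htn0 j), hj2⟩
  set τ : ℝ := δ / (4 * M) with hτdef
  have hτ : 0 < τ := by positivity
  set A : Set ℝ := g '' Ici 0 with hAdef
  have hAne : A.Nonempty := ⟨g 0, 0, mem_Ici.mpr le_rfl, rfl⟩
  have hAbdd : BddAbove A := ⟨K, by rintro _ ⟨t, ht, rfl⟩; exact hgK t ht⟩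
  set L : ℝ := sSup A with hLdef
  have hL : ∀ t : ℝ, 0 ≤ t → g t ≤ L := fun t ht => le_csSup hAbdd ⟨t, ht, rfl⟩
  obtain ⟨a, ⟨tstar, htstar, rfl⟩, hastar⟩ :=
    exists_lt_of_lt_csSup hAne (show L - c * τ < L by linarith [mul_pos hc hτ])
  have hev : ∀ᶠ j in atTop, tn j ≥ tstar ∧ x (tn j) ∈ Metric.ball sbar (δ / 4) :=
    (htninf.eventually_ge_atTop tstar).and (htns (Metric.ball_mem_nhds sbar (by positivity)))
  obtain ⟨j, hj1, hj2⟩ := hev.exists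
  have hclose : L - c * τ < g (tn j) :=
    lt_of_lt_of_le hastar (hgmono.monotoneOn (mem_Ici.mpr htstar) (mem_Ici.mpr (htn0 j)) hj1)
  exact stmt2_core S f Z Z' hZderiv x hxS hxode sbar δ c M hδ hc hM hb L hL (tn j) (htn0 j)
    hj2 hclose

/-- **Monotonicity principle.** Let `S ⊆ ℝⁿ` be open, `f : S → ℝⁿ`
continuous, and `x : [0,∞) → S` a `C¹` solution of `dx/dt = f(x)`. Let `Z : S → ℝ`
be `C¹` with `∇Z·f > 0` on `S`. Then every ω-limit point `s̄` of the curve `x`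
satisfies: (i) `s̄ ∉ S` (it lies on the boundary of `S`); (ii)
`limsup_{y→s̄, y∈S} Z(y) > inf_S Z`; and (iii) either
`limsup_{y→s̄, y∈S} Z(y) = sup_S Z`, or `liminf_{y→s̄, y∈S} (∇Z·f)(y) = 0`, or
`limsup_{y→s̄, y∈S} |f(y)| = ∞`. -/
theorem stmt2
    (n : ℕ)
    (S : Set (EuclideanSpace ℝ (Fin n))) (hS : IsOpen S)
    (f : EuclideanSpace ℝ (Fin n) → EuclideanSpace ℝ (Fin n))
    (hf : ContinuousOn f S)
    (Z : EuclideanSpace ℝ (Fin n) → ℝ)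
    (Z' : EuclideanSpace ℝ (Fin n) → (EuclideanSpace ℝ (Fin n) →L[ℝ] ℝ))
    (hZderiv : ∀ y ∈ S, HasFDerivAt Z (Z' y) y)
    (hZ'cont : ContinuousOn Z' S)
    (hpos : ∀ y ∈ S, 0 < Z' y (f y))
    (x : ℝ → EuclideanSpace ℝ (Fin n))
    (hxS : ∀ t : ℝ, 0 ≤ t → x t ∈ S)
    (hxode : ∀ t : ℝ, 0 ≤ t → HasDerivAt x (f (x t)) t)
    (sbar : EuclideanSpace ℝ (Fin n))
    (hlimpt : ∃ tn : ℕ → ℝ, (∀ j, 0 ≤ tn j) ∧ Tendsto tn atTop atTop ∧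
      Tendsto (fun j => x (tn j)) atTop (nhds sbar)) :
    sbar ∉ S ∧ sbar ∈ frontier S ∧
    (⨅ y ∈ S, (Z y : EReal)) <
      Filter.limsup (fun y => (Z y : EReal)) (nhdsWithin sbar S) ∧
    (Filter.limsup (fun y => (Z y : EReal)) (nhdsWithin sbar S) =
        (⨆ y ∈ S, (Z y : EReal)) ∨
      Filter.liminf (fun y => ((Z' y (f y) : ℝ) : EReal)) (nhdsWithin sbar S) =
        (0 : EReal) ∨
      Filter.limsup (fun y => ((‖f y‖ : ℝ) : EReal)) (nhdsWithin sbar S) = ⊤) := by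
  obtain ⟨tn, htn0, htninf, htns⟩ := hlimpt
  have hmemS : ∀ j, x (tn j) ∈ S := fun j => hxS _ (htn0 j)
  have htnsW : Tendsto (fun j => x (tn j)) atTop (nhdsWithin sbar S) :=
    tendsto_nhdsWithin_of_tendsto_nhds_of_eventually_within _ htns
      (Eventually.of_forall hmemS)
  have hcl : sbar ∈ closure S := mem_closure_of_tendsto htns (Eventually.of_forall hmemS)
  haveI hneF : (nhdsWithin sbar S).NeBot := mem_closure_iff_nhdsWithin_neBot.mp hcl
  set g : ℝ → ℝ := fun t => Z (x t) with hgdef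
  have hg : ∀ t : ℝ, 0 ≤ t → HasDerivAt g (Z' (x t) (f (x t))) t := fun t ht =>
    (hZderiv (x t) (hxS t ht)).comp_hasDerivAt t (hxode t ht)
  have hgmono : StrictMonoOn g (Ici (0 : ℝ)) := by
    apply strictMonoOn_of_deriv_pos (convex_Ici 0)
    · exact fun t ht => (hg t ht).continuousAt.continuousWithinAt
    · intro t ht
      rw [interior_Ici] at ht
      rw [(hg t ht.le).deriv]
      exact hpos _ (hxS t ht.le)
  -- (i)
  have hnotin : sbar ∉ S := by
    intro hmem
    have hφ : ContinuousAt (fun y => Z' y (f y)) sbar :=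
      (hZ'cont.clm_apply hf).continuousAt (hS.mem_nhds hmem)
    set c : ℝ := Z' sbar (f sbar) / 2 with hcdef
    have hc : 0 < c := half_pos (hpos sbar hmem)
    have ev1 : ∀ᶠ y in 𝓝 sbar, c < Z' y (f y) :=
      hφ (Ioi_mem_nhds (by rw [hcdef]; linarith [hpos sbar hmem]))
    have hfnorm : ContinuousAt (fun y => ‖f y‖) sbar :=
      (hf.continuousAt (hS.mem_nhds hmem)).norm
    have ev2 : ∀ᶠ y in 𝓝 sbar, ‖f y‖ < ‖f sbar‖ + 1 := hfnorm (Iio_mem_nhds (lt_add_one _))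
    have hZc : ContinuousAt Z sbar := (hZderiv sbar hmem).continuousAt
    have ev3 : ∀ᶠ y in 𝓝 sbar, Z y < Z sbar + 1 := hZc (Iio_mem_nhds (lt_add_one _))
    obtain ⟨δ, hδ, hball⟩ := Metric.eventually_nhds_iff.mp ((ev1.and ev2).and ev3)
    exact stmt2_aux S f Z Z' hZderiv hpos x hxS hxode sbar tn htn0 htninf htns δ c
      (‖f sbar‖ + 1) (Z sbar + 1) hδ hc (by positivity)
      (fun y hy => ⟨(hball (Metric.mem_ball.mp hy.2)).1.1.le,
        (hball (Metric.mem_ball.mp hy.2)).1.2.le⟩)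
      (fun y hy => (hball (Metric.mem_ball.mp hy.2)).2.le)
  refine ⟨hnotin, ⟨hcl, by rwa [hS.interior_eq]⟩, ?_, ?_⟩
  -- (ii)
  · have h01 : g 0 < g 1 := hgmono (mem_Ici.mpr le_rfl) (mem_Ici.mpr zero_le_one) one_pos
    have hinf : (⨅ y ∈ S, (Z y : EReal)) ≤ ((g 0 : ℝ) : EReal) :=
      iInf₂_le (x 0) (hxS 0 le_rfl)
    have hfreq : ∃ᶠ y in nhdsWithin sbar S, ((g 1 : ℝ) : EReal) ≤ (Z y : EReal) := by
      apply htnsW.frequently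
      apply Eventually.frequently
      filter_upwards [htninf.eventually_ge_atTop 1] with j hj
      exact EReal.coe_le_coe_iff.mpr
        (hgmono.monotoneOn (mem_Ici.mpr zero_le_one) (mem_Ici.mpr (htn0 j)) hj)
    have hlim := le_limsup_of_frequently_le hfreq
    exact lt_of_le_of_lt hinf (lt_of_lt_of_le (EReal.coe_lt_coe_iff.mpr h01) hlim)
  -- (iii)
  · by_contra hcon
    push_neg at hcon
    obtain ⟨h1, h2, h3⟩ := hcon
    have hevS : ∀ᶠ y in nhdsWithin sbar S, y ∈ S := eventually_mem_nhdsWithin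
    have hsup : Filter.limsup (fun y => (Z y : EReal)) (nhdsWithin sbar S) ≤
        ⨆ y ∈ S, (Z y : EReal) :=
      limsup_le_of_le (by isBoundedDefault)
        (hevS.mono fun y hy => le_iSup₂ (f := fun y _ => (Z y : EReal)) y hy)
    have hlt : Filter.limsup (fun y => (Z y : EReal)) (nhdsWithin sbar S) < ⊤ :=
      (ne_top_of_lt (lt_of_le_of_ne hsup h1)).lt_top
    obtain ⟨K, hK1, _⟩ := EReal.lt_iff_exists_real_btwn.mp hlt
    have evK : ∀ᶠ y in nhdsWithin sbar S, Z y ≤ K :=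
      (eventually_lt_of_limsup_lt hK1).mono fun y hy => (EReal.coe_lt_coe_iff.mp hy).le
    have hliminf0 : (0 : EReal) ≤
        Filter.liminf (fun y => ((Z' y (f y) : ℝ) : EReal)) (nhdsWithin sbar S) :=
      le_liminf_of_le (by isBoundedDefault)
        (hevS.mono fun y hy => by exact_mod_cast (hpos y hy).le)
    have hlpos : (0 : EReal) <
        Filter.liminf (fun y => ((Z' y (f y) : ℝ) : EReal)) (nhdsWithin sbar S) :=
      hliminf0.lt_of_ne (fun h => h2 h.symm)
    obtain ⟨c, hc0, hcl2⟩ := EReal.lt_iff_exists_real_btwn.mp hlpos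
    have evc : ∀ᶠ y in nhdsWithin sbar S, c ≤ Z' y (f y) :=
      (eventually_lt_of_lt_liminf hcl2).mono fun y hy => (EReal.coe_lt_coe_iff.mp hy).le
    have hc : 0 < c := by exact_mod_cast hc0
    have hflt : Filter.limsup (fun y => ((‖f y‖ : ℝ) : EReal)) (nhdsWithin sbar S) < ⊤ :=
      h3.lt_top
    obtain ⟨M0, hM1, _⟩ := EReal.lt_iff_exists_real_btwn.mp hflt
    have evM : ∀ᶠ y in nhdsWithin sbar S, ‖f y‖ ≤ max M0 1 :=
      (eventually_lt_of_limsup_lt hM1).mono fun y hy =>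
        ((EReal.coe_lt_coe_iff.mp hy).le).trans (le_max_left _ _)
    have evAll := (evc.and evM).and evK
    rw [eventually_nhdsWithin_iff] at evAll
    obtain ⟨δ, hδ, hball⟩ := Metric.eventually_nhds_iff.mp evAll
    exact stmt2_aux S f Z Z' hZderiv hpos x hxS hxode sbar tn htn0 htninf htns δ c
      (max M0 1) K hδ hc (lt_of_lt_of_le one_pos (le_max_right _ _))
      (fun y hy => (hball (Metric.mem_ball.mp hy.2) hy.1).1)
      (fun y hy => (hball (Metric.mem_ball.mp hy.2) hy.1).2)
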